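/- Let 0 < b < 1 and k ∈ ℕ. Define ψ^(k) : ℤ≥1 → ℝ by ψ^(k)_n = (−1)^n b^n √n · (1−b²) √((k+1)/b^{2(k+1)}) · M_k(n), with M_k(n) = Σ_{s=0}^{k} (−1)^s C(k,s) ((n+1)(n+2)⋯(n+s)/(s+1)!) (1−b²)^s. Then ψ^(k) belongs to ℓ²(ℤ≥1) with ‖ψ^(k)‖ = 1, and it satisfies, for every n ≥ 1 (with ψ^(k)_0 := 0), (1+b²) n ψ^(k)_n + b √((n−1)n) ψ^(k)_{n−1} + b √(n(n+1)) ψ^(k)_{n+1} = (1−b²)(k+1) ψ^(k)_n. Hence the tridiagonal matrix ℋ₀ has, for each n ≥ 1, the eigenvalue (1−b²) n = |1−b²| n with a normalized ℓ² eigenvector. -/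

import Mathlib

/-- The Meixner polynomial (up to normalization): the terminating hypergeometric sum
`M_k(n) = ₂F₁(−k, n+1; 2; 1−b²)
       = Σ_{s=0}^{k} (−1)^s C(k,s) ((n+1)(n+2)⋯(n+s)/(s+1)!) (1−b²)^s`. -/
noncomputable def meixner (b : ℝ) (k n : ℕ) : ℝ :=
  ∑ s ∈ Finset.range (k + 1),
    (-1) ^ s * (k.choose s : ℝ) * ((∏ t ∈ Finset.Icc 1 s, ((n : ℝ) + t)) /
      ((s + 1).factorial : ℝ)) * (1 - b ^ 2) ^ s

/-- The normalized eigenvectors of the symmetric tridiagonal matrix `ℋ₀` of Appendix 1: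
`ψ^(k)_n = (−1)^n b^n √n (1−b²) √((k+1)/b^{2(k+1)}) M_k(n)` (in particular `ψ^(k)_0 = 0`). -/
noncomputable def meixnerPsi (b : ℝ) (k n : ℕ) : ℝ :=
  (-1) ^ n * b ^ n * Real.sqrt n *
    ((1 - b ^ 2) * Real.sqrt ((k + 1) / b ^ (2 * (k + 1))) * meixner b k n)

/-! ### Auxiliary definitions -/

noncomputable def Qp (x : ℝ) (s : ℕ) : ℝ := ∏ t ∈ Finset.Icc 1 s, (x + t)

noncomputable def MX (c x : ℝ) (k : ℕ) : ℝ :=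
  ∑ s ∈ Finset.range (k + 1),
    (-1) ^ s * (k.choose s : ℝ) * (Qp x s / ((s + 1).factorial : ℝ)) * c ^ s

lemma meixner_eq_MX (b : ℝ) (k n : ℕ) : meixner b k n = MX (1 - b ^ 2) (n : ℝ) k := rfl

lemma Qp_zero (x : ℝ) : Qp x 0 = 1 := by simp [Qp]

lemma Qp_succ (x : ℝ) (s : ℕ) : Qp x (s + 1) = Qp x s * (x + (s + 1)) := by
  rw [Qp, Finset.prod_Icc_succ_top (Nat.le_add_left 1 s)]
  push_cast [Qp]; ring

lemma Qp_shift_down (x : ℝ) (s : ℕ) : Qp (x - 1) (s + 1) = x * Qp x s := by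
  induction s with
  | zero => simp [Qp]
  | succ s ih => rw [Qp_succ, ih, Qp_succ]; push_cast; ring

lemma Qp_shift_up (x : ℝ) (s : ℕ) : (x + 1) * Qp (x + 1) s = Qp x (s + 1) := by
  induction s with
  | zero => simp [Qp]
  | succ s ih => rw [Qp_succ, Qp_succ, ← ih]; push_cast; ring

/-! ### The three-term recurrence in the argument -/

lemma MX_rec (c x : ℝ) (k : ℕ) :
    (2 - c) * x * MX c x k - (x - 1) * MX c (x - 1) k - (1 - c) * (x + 1) * MX c (x + 1) k
      = c * (k + 1) * MX c x k := by
  rw [← sub_eq_zero]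
  have key : (2 - c) * x * MX c x k - (x - 1) * MX c (x - 1) k
        - (1 - c) * (x + 1) * MX c (x + 1) k - c * (k + 1) * MX c x k
      = (∑ s ∈ Finset.range (k + 1),
          (-1) ^ s * (k.choose s : ℝ) *
            ((2 * x * Qp x s - (x - 1) * Qp (x - 1) s - (x + 1) * Qp (x + 1) s) /
              ((s + 1).factorial : ℝ)) * c ^ s)
        + (∑ s ∈ Finset.range (k + 1),
          (-1) ^ s * (k.choose s : ℝ) *
            ((-(x * Qp x s) + (x + 1) * Qp (x + 1) s - (k + 1) * Qp x s) /
              ((s + 1).factorial : ℝ)) * c ^ (s + 1)) := by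
    simp only [MX, Finset.mul_sum, ← Finset.sum_sub_distrib, ← Finset.sum_add_distrib]
    exact Finset.sum_congr rfl (fun s _ => by ring)
  rw [key]
  have h1 : (∑ s ∈ Finset.range (k + 1),
          (-1) ^ s * (k.choose s : ℝ) *
            ((2 * x * Qp x s - (x - 1) * Qp (x - 1) s - (x + 1) * Qp (x + 1) s) /
              ((s + 1).factorial : ℝ)) * c ^ s)
      = ∑ s ∈ Finset.range k,
          (-1) ^ (s + 1) * (k.choose (s + 1) : ℝ) *
            ((2 * x * Qp x (s + 1) - (x - 1) * Qp (x - 1) (s + 1)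
              - (x + 1) * Qp (x + 1) (s + 1)) / ((s + 2).factorial : ℝ)) * c ^ (s + 1) := by
    rw [Finset.sum_range_succ']
    have h0 : 2 * x * Qp x 0 - (x - 1) * Qp (x - 1) 0 - (x + 1) * Qp (x + 1) 0 = 0 := by
      simp [Qp_zero]; ring
    rw [h0]
    simp
  have h2 : (∑ s ∈ Finset.range (k + 1),
          (-1) ^ s * (k.choose s : ℝ) *
            ((-(x * Qp x s) + (x + 1) * Qp (x + 1) s - (k + 1) * Qp x s) /
              ((s + 1).factorial : ℝ)) * c ^ (s + 1))
      = ∑ s ∈ Finset.range k,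
          (-1) ^ s * (k.choose s : ℝ) *
            ((-(x * Qp x s) + (x + 1) * Qp (x + 1) s - (k + 1) * Qp x s) /
              ((s + 1).factorial : ℝ)) * c ^ (s + 1) := by
    rw [Finset.sum_range_succ]
    have hlast : -(x * Qp x k) + (x + 1) * Qp (x + 1) k - (k + 1) * Qp x k = 0 := by
      rw [Qp_shift_up, Qp_succ]; push_cast; ring
    rw [hlast]
    simp
  rw [h1, h2, ← Finset.sum_add_distrib]
  apply Finset.sum_eq_zero
  intro s hs
  have hsk : s < k := Finset.mem_range.mp hs
  have e1 : (x - 1) * Qp (x - 1) (s + 1) = (x - 1) * (x * Qp x s) := by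
    rw [Qp_shift_down]
  have e2 : (x + 1) * Qp (x + 1) (s + 1) = Qp x s * (x + (s + 1)) * (x + (s + 2)) := by
    rw [Qp_shift_up, Qp_succ, Qp_succ]; push_cast; ring
  have e3 : (x + 1) * Qp (x + 1) s = Qp x s * (x + (s + 1)) := by
    rw [Qp_shift_up, Qp_succ]
  have e4 : Qp x (s + 1) = Qp x s * (x + (s + 1)) := Qp_succ x s
  have hfac : ((s + 2).factorial : ℝ) = (s + 2) * ((s + 1).factorial : ℝ) := by
    rw [Nat.factorial_succ (s + 1)]; push_cast; ring
  have hch : ((k.choose (s + 1) : ℝ)) * (s + 1) = (k.choose s : ℝ) * ((k : ℝ) - s) := by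
    have h := Nat.choose_succ_right_eq k s
    have hcast : ((k - s : ℕ) : ℝ) = (k : ℝ) - s := by rw [Nat.cast_sub hsk.le]
    calc ((k.choose (s + 1) : ℝ)) * (s + 1) = ((k.choose (s + 1) * (s + 1) : ℕ) : ℝ) := by
            push_cast; ring
      _ = ((k.choose s * (k - s) : ℕ) : ℝ) := by rw [h]
      _ = (k.choose s : ℝ) * ((k : ℝ) - s) := by push_cast [hcast]; ring
  rw [e1, e2, e3, e4, hfac]
  have hf : ((s + 1).factorial : ℝ) ≠ 0 := by positivity
  have hs2 : ((s : ℝ) + 2) ≠ 0 := by positivity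
  field_simp
  linear_combination ((-1 : ℝ) ^ s * Qp x s * c * c ^ s
    * ((s : ℝ) + 2)) * hch

/-! ### Binomial identities and the recurrence in the degree -/

lemma nat_id2 (k s : ℕ) : k * Nat.choose (k - 1) s + s * Nat.choose k s = k * Nat.choose k s := by
  cases k with
  | zero =>
      cases s with
      | zero => simp
      | succ t => simp [Nat.choose_eq_zero_of_lt (Nat.succ_pos t)]
  | succ j =>
      have h1 : (j + 1) * Nat.choose j s = Nat.choose (j + 1) s * ((j + 1) - s) := by
        rw [Nat.add_one_mul_choose_eq]
        exact Nat.choose_succ_right_eq (j + 1) s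
      simp only [Nat.succ_sub_one]
      rcases le_or_gt s (j + 1) with hs | hs
      · rw [h1, mul_comm s _, ← Nat.mul_add, Nat.sub_add_cancel hs, mul_comm]
      · rw [Nat.choose_eq_zero_of_lt hs, Nat.choose_eq_zero_of_lt (by omega : j < s)]
        simp

lemma nat_id1 (k s : ℕ) :
    (k + 2) * Nat.choose (k + 1) (s + 1) + k * Nat.choose (k - 1) (s + 1)
      = 2 * ((k + 1) * Nat.choose k (s + 1)) + (s + 2) * Nat.choose k s := by
  have e1 : (k + 2) * Nat.choose (k + 1) (s + 1) = Nat.choose (k + 2) (s + 2) * (s + 2) :=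
    Nat.add_one_mul_choose_eq (k + 1) (s + 1)
  have e2 : (k + 1) * Nat.choose k (s + 1) = Nat.choose (k + 1) (s + 2) * (s + 2) :=
    Nat.add_one_mul_choose_eq k (s + 1)
  have e3 : k * Nat.choose (k - 1) (s + 1) = Nat.choose k (s + 2) * (s + 2) := by
    cases k with
    | zero => simp [Nat.choose_eq_zero_of_lt (by omega : 0 < s + 2)]
    | succ j => exact Nat.add_one_mul_choose_eq j (s + 1)
  rw [e1, e2, e3]
  have p1 : Nat.choose (k + 2) (s + 2) = Nat.choose (k + 1) (s + 1) + Nat.choose (k + 1) (s + 2) :=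
    Nat.choose_succ_succ (k + 1) (s + 1)
  have p2 : Nat.choose (k + 1) (s + 2) = Nat.choose k (s + 1) + Nat.choose k (s + 2) :=
    Nat.choose_succ_succ k (s + 1)
  have p3 : Nat.choose (k + 1) (s + 1) = Nat.choose k s + Nat.choose k (s + 1) :=
    Nat.choose_succ_succ k s
  rw [p1, p2, p3]
  ring

lemma MX_ext (c x : ℝ) (k m : ℕ) (h : k + 1 ≤ m) :
    MX c x k = ∑ s ∈ Finset.range m,
      (-1) ^ s * (k.choose s : ℝ) * (Qp x s / ((s + 1).factorial : ℝ)) * c ^ s := by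
  rw [MX]
  apply Finset.sum_subset (Finset.range_subset_range.mpr h)
  intro s _ hs
  have hk : k < s := by simp only [Finset.mem_range, not_lt] at hs; omega
  simp [Nat.choose_eq_zero_of_lt hk]

lemma MX_krec (c x : ℝ) (k : ℕ) :
    -(c * x * MX c x k) = (k + 2) * MX c x (k + 1) - (k + 1) * (2 - c) * MX c x k
      + k * (1 - c) * MX c x (k - 1) := by
  have S1 : (k + 2) * MX c x (k + 1) - 2 * ((k + 1) * MX c x k) + k * MX c x (k - 1)
      = ∑ s ∈ Finset.range (k + 3),
          (-1) ^ s * (((k : ℝ) + 2) * ((k + 1).choose s : ℝ)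
              - 2 * (((k : ℝ) + 1) * (k.choose s : ℝ)) + (k : ℝ) * ((k - 1).choose s : ℝ)) *
            (Qp x s / ((s + 1).factorial : ℝ)) * c ^ s := by
    rw [MX_ext c x (k + 1) (k + 3) (by omega), MX_ext c x k (k + 3) (by omega),
      MX_ext c x (k - 1) (k + 3) (by omega)]
    simp only [Finset.mul_sum, ← Finset.sum_sub_distrib, ← Finset.sum_add_distrib]
    exact Finset.sum_congr rfl (fun s _ => by ring)
  have S2 : c * (((k : ℝ) + 1) * MX c x k - (k : ℝ) * MX c x (k - 1) + x * MX c x k)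
      = ∑ s ∈ Finset.range (k + 2),
          (-1) ^ s * ((((k : ℝ) + 1) * (k.choose s : ℝ) - (k : ℝ) * ((k - 1).choose s : ℝ))
              + x * (k.choose s : ℝ)) *
            (Qp x s / ((s + 1).factorial : ℝ)) * c ^ (s + 1) := by
    rw [MX_ext c x k (k + 2) (by omega), MX_ext c x (k - 1) (k + 2) (by omega)]
    simp only [Finset.mul_sum, ← Finset.sum_sub_distrib, ← Finset.sum_add_distrib]
    exact Finset.sum_congr rfl (fun s _ => by ring)
  have main : (∑ s ∈ Finset.range (k + 3),
          (-1) ^ s * (((k : ℝ) + 2) * ((k + 1).choose s : ℝ)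
              - 2 * (((k : ℝ) + 1) * (k.choose s : ℝ)) + (k : ℝ) * ((k - 1).choose s : ℝ)) *
            (Qp x s / ((s + 1).factorial : ℝ)) * c ^ s)
      + (∑ s ∈ Finset.range (k + 2),
          (-1) ^ s * ((((k : ℝ) + 1) * (k.choose s : ℝ) - (k : ℝ) * ((k - 1).choose s : ℝ))
              + x * (k.choose s : ℝ)) *
            (Qp x s / ((s + 1).factorial : ℝ)) * c ^ (s + 1)) = 0 := by
    rw [Finset.sum_range_succ']
    have h0 : ((k : ℝ) + 2) * ((k + 1).choose 0 : ℝ) - 2 * (((k : ℝ) + 1) * (k.choose 0 : ℝ))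
        + (k : ℝ) * ((k - 1).choose 0 : ℝ) = 0 := by simp; ring
    rw [h0]
    simp only [mul_zero, zero_mul, mul_one, pow_zero, add_zero, zero_add]
    rw [← Finset.sum_add_distrib]
    apply Finset.sum_eq_zero
    intro s _
    have hN1 : ((k : ℝ) + 2) * ((k + 1).choose (s + 1) : ℝ)
        + (k : ℝ) * ((k - 1).choose (s + 1) : ℝ)
        = 2 * (((k : ℝ) + 1) * (k.choose (s + 1) : ℝ)) + ((s : ℝ) + 2) * (k.choose s : ℝ) := by
      exact_mod_cast congrArg (Nat.cast : ℕ → ℝ) (nat_id1 k s)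
    have hN2 : (k : ℝ) * ((k - 1).choose s : ℝ) + (s : ℝ) * (k.choose s : ℝ)
        = (k : ℝ) * (k.choose s : ℝ) := by
      exact_mod_cast congrArg (Nat.cast : ℕ → ℝ) (nat_id2 k s)
    have hB1 : ((k : ℝ) + 2) * ((k + 1).choose (s + 1) : ℝ)
        - 2 * (((k : ℝ) + 1) * (k.choose (s + 1) : ℝ)) + (k : ℝ) * ((k - 1).choose (s + 1) : ℝ)
        = ((s : ℝ) + 2) * (k.choose s : ℝ) := by linarith
    have hB2 : ((k : ℝ) + 1) * (k.choose s : ℝ) - (k : ℝ) * ((k - 1).choose s : ℝ)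
        = ((s : ℝ) + 1) * (k.choose s : ℝ) := by linarith
    rw [hB1, hB2, Qp_succ]
    have hfac : ((s + 1 + 1).factorial : ℝ) = ((s : ℝ) + 2) * ((s + 1).factorial : ℝ) := by
      rw [Nat.factorial_succ (s + 1)]; push_cast; ring
    rw [hfac]
    have hf : ((s + 1).factorial : ℝ) ≠ 0 := by positivity
    have hs2 : ((s : ℝ) + 2) ≠ 0 := by positivity
    field_simp
    ring
  linarith [S1, S2, main]

/-! ### Instantiated recurrences for the Meixner polynomials -/

lemma meixner_rec_nat (b : ℝ) (k m : ℕ) :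
    (1 + b ^ 2) * ((m : ℝ) + 1) * meixner b k (m + 1) - (m : ℝ) * meixner b k m
      - b ^ 2 * ((m : ℝ) + 2) * meixner b k (m + 2)
      = (1 - b ^ 2) * ((k : ℝ) + 1) * meixner b k (m + 1) := by
  have h := MX_rec (1 - b ^ 2) ((m : ℝ) + 1) k
  have c1 : ((m : ℝ) + 1) - 1 = (m : ℝ) := by ring
  have c2 : ((m : ℝ) + 1) + 1 = ((m : ℝ) + 2) := by ring
  rw [c1, c2] at h
  have e0 : meixner b k m = MX (1 - b ^ 2) ((m : ℝ)) k := meixner_eq_MX b k m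
  have e1 : meixner b k (m + 1) = MX (1 - b ^ 2) ((m : ℝ) + 1) k := by
    rw [meixner_eq_MX]; push_cast; ring_nf
  have e2 : meixner b k (m + 2) = MX (1 - b ^ 2) ((m : ℝ) + 2) k := by
    rw [meixner_eq_MX]; push_cast; ring_nf
  rw [e0, e1, e2]
  linear_combination h

lemma meixner_krec (b : ℝ) (k n : ℕ) :
    -((1 - b ^ 2) * (n : ℝ) * meixner b k n)
      = ((k : ℝ) + 2) * meixner b (k + 1) n - ((k : ℝ) + 1) * (1 + b ^ 2) * meixner b k n
        + (k : ℝ) * b ^ 2 * meixner b (k - 1) n := by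
  have h := MX_krec (1 - b ^ 2) ((n : ℝ)) k
  rw [meixner_eq_MX b (k + 1) n, meixner_eq_MX b k n, meixner_eq_MX b (k - 1) n]
  push_cast at h
  linear_combination h
/-! ### Growth bounds and summability -/

lemma summable_poly_geo {q : ℝ} (hq0 : 0 < q) (hq1 : q < 1) (d : ℕ) (C : ℝ) (f : ℕ → ℝ)
    (hf : ∀ n, |f n| ≤ C * ((n : ℝ) + 1) ^ d * q ^ n) : Summable f := by
  have h1 : Summable (fun n : ℕ => ((n : ℝ)) ^ d * q ^ n) :=
    summable_pow_mul_geometric_of_norm_lt_one d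
      (by rw [Real.norm_eq_abs, abs_of_pos hq0]; exact hq1)
  have h2 : Summable (fun n : ℕ => (((n + 1 : ℕ) : ℝ)) ^ d * q ^ (n + 1)) :=
    (summable_nat_add_iff 1).mpr h1
  have h3 : Summable (fun n : ℕ => C * ((n : ℝ) + 1) ^ d * q ^ n) := by
    have h4 := h2.mul_left (C / q)
    apply h4.congr
    intro n
    push_cast
    field_simp
    ring
  exact Summable.of_norm_bounded h3 (fun n => by rw [Real.norm_eq_abs]; exact hf n)

lemma Qp_le (n s : ℕ) : Qp (n : ℝ) s ≤ (s.factorial : ℝ) * ((n : ℝ) + 1) ^ s := by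
  rw [Qp]
  calc ∏ t ∈ Finset.Icc 1 s, ((n : ℝ) + t)
      ≤ ∏ t ∈ Finset.Icc 1 s, ((t : ℝ) * ((n : ℝ) + 1)) := by
        apply Finset.prod_le_prod
        · intro t _; positivity
        · intro t ht
          have h1 : 1 ≤ t := (Finset.mem_Icc.mp ht).1
          have h1' : (1 : ℝ) ≤ t := by exact_mod_cast h1
          nlinarith [Nat.cast_nonneg (α := ℝ) n]
    _ = (∏ t ∈ Finset.Icc 1 s, (t : ℝ)) * ((n : ℝ) + 1) ^ s := by
        rw [Finset.prod_mul_distrib, Finset.prod_const, Nat.card_Icc]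
        simp
    _ = (s.factorial : ℝ) * ((n : ℝ) + 1) ^ s := by
        congr 1
        rw [← Nat.cast_prod]
        congr 1
        have he : Finset.Icc 1 s = Finset.Ico 1 (s + 1) := by
          ext t; simp [Nat.lt_succ_iff]
        rw [he, Finset.prod_Ico_id_eq_factorial]

/-- bound constant for the meixner polynomials -/
noncomputable def CB (b : ℝ) (k : ℕ) : ℝ :=
  ∑ s ∈ Finset.range (k + 1), (k.choose s : ℝ) * |1 - b ^ 2| ^ s

lemma CB_nonneg (b : ℝ) (k : ℕ) : 0 ≤ CB b k := by
  apply Finset.sum_nonneg; intro s _; positivity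

lemma Qp_nonneg (n s : ℕ) : 0 ≤ Qp (n : ℝ) s := by
  apply Finset.prod_nonneg; intro t _; positivity

lemma meixner_abs_le (b : ℝ) (k n : ℕ) : |meixner b k n| ≤ CB b k * ((n : ℝ) + 1) ^ k := by
  have h0 : meixner b k n = ∑ s ∈ Finset.range (k + 1),
      (-1) ^ s * (k.choose s : ℝ) * (Qp (n : ℝ) s / ((s + 1).factorial : ℝ)) * (1 - b ^ 2) ^ s :=
    rfl
  rw [h0, CB, Finset.sum_mul]
  refine (Finset.abs_sum_le_sum_abs _ _).trans (Finset.sum_le_sum ?_)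
  intro s hs
  have hsk : s ≤ k := by simpa [Nat.lt_succ_iff] using hs
  rw [abs_mul, abs_mul, abs_mul, abs_pow, abs_neg, abs_one, one_pow, one_mul, abs_pow]
  rw [Nat.abs_cast]
  have hQ : |Qp (n : ℝ) s / ((s + 1).factorial : ℝ)| ≤ ((n : ℝ) + 1) ^ k := by
    rw [abs_div, abs_of_nonneg (Qp_nonneg n s), Nat.abs_cast]
    rw [div_le_iff₀ (by positivity)]
    calc Qp (n : ℝ) s ≤ (s.factorial : ℝ) * ((n : ℝ) + 1) ^ s := Qp_le n s
      _ ≤ ((n : ℝ) + 1) ^ k * ((s + 1).factorial : ℝ) := by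
          have h1 : ((n : ℝ) + 1) ^ s ≤ ((n : ℝ) + 1) ^ k :=
            pow_le_pow_right₀ (by linarith [Nat.cast_nonneg (α := ℝ) n]) hsk
          have h2 : (s.factorial : ℝ) ≤ ((s + 1).factorial : ℝ) := by
            exact_mod_cast Nat.factorial_le (Nat.le_succ s)
          have h3 : (0 : ℝ) < (s.factorial : ℝ) := by exact_mod_cast Nat.factorial_pos s
          have h4 : (0 : ℝ) ≤ ((n : ℝ) + 1) ^ s := by positivity
          nlinarith
  calc (k.choose s : ℝ) * |Qp (n : ℝ) s / ((s + 1).factorial : ℝ)| * |1 - b ^ 2| ^ s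
      ≤ (k.choose s : ℝ) * (((n : ℝ) + 1) ^ k) * |1 - b ^ 2| ^ s := by
        have hc : (0 : ℝ) ≤ (k.choose s : ℝ) := by positivity
        have hp : (0 : ℝ) ≤ |1 - b ^ 2| ^ s := by positivity
        gcongr
    _ = (k.choose s : ℝ) * |1 - b ^ 2| ^ s * ((n : ℝ) + 1) ^ k := by ring

lemma summable_form {b : ℝ} (hb0 : 0 < b) (hb1 : b < 1) (j k : ℕ) (σ τ : ℕ → ℕ)
    (hσ : ∀ n, σ n ≤ n + 1) (hτ : ∀ n, τ n ≤ n + 1)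
    (P : ℕ → ℝ) (hP : ∀ n, |P n| ≤ ((n : ℝ) + 1) ^ 2) :
    Summable (fun n : ℕ => P n * (b ^ 2) ^ n * meixner b j (σ n) * meixner b k (τ n)) := by
  have hq0 : (0 : ℝ) < b ^ 2 := by positivity
  have hq1 : b ^ 2 < 1 := by nlinarith
  apply summable_poly_geo hq0 hq1 (2 + j + k) (CB b j * 2 ^ j * (CB b k * 2 ^ k))
  intro n
  have hσ' : ((σ n : ℝ) + 1) ^ j ≤ 2 ^ j * ((n : ℝ) + 1) ^ j := by
    calc ((σ n : ℝ) + 1) ^ j ≤ (2 * ((n : ℝ) + 1)) ^ j := by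
          apply pow_le_pow_left₀ (by positivity)
          have h5 : (σ n : ℝ) ≤ (n : ℝ) + 1 := by exact_mod_cast hσ n
          linarith
      _ = 2 ^ j * ((n : ℝ) + 1) ^ j := by rw [mul_pow]
  have hτ' : ((τ n : ℝ) + 1) ^ k ≤ 2 ^ k * ((n : ℝ) + 1) ^ k := by
    calc ((τ n : ℝ) + 1) ^ k ≤ (2 * ((n : ℝ) + 1)) ^ k := by
          apply pow_le_pow_left₀ (by positivity)
          have h5 : (τ n : ℝ) ≤ (n : ℝ) + 1 := by exact_mod_cast hτ n
          linarith
      _ = 2 ^ k * ((n : ℝ) + 1) ^ k := by rw [mul_pow]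
  have hM1 : |meixner b j (σ n)| ≤ CB b j * (2 ^ j * ((n : ℝ) + 1) ^ j) := by
    calc |meixner b j (σ n)| ≤ CB b j * ((σ n : ℝ) + 1) ^ j := meixner_abs_le b j (σ n)
      _ ≤ CB b j * (2 ^ j * ((n : ℝ) + 1) ^ j) := by
          have hC : (0 : ℝ) ≤ CB b j := CB_nonneg b j
          nlinarith
  have hM2 : |meixner b k (τ n)| ≤ CB b k * (2 ^ k * ((n : ℝ) + 1) ^ k) := by
    calc |meixner b k (τ n)| ≤ CB b k * ((τ n : ℝ) + 1) ^ k := meixner_abs_le b k (τ n)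
      _ ≤ CB b k * (2 ^ k * ((n : ℝ) + 1) ^ k) := by
          have hC : (0 : ℝ) ≤ CB b k := CB_nonneg b k
          nlinarith
  have hqn : (0 : ℝ) ≤ (b ^ 2) ^ n := by positivity
  have hnn : (0 : ℝ) ≤ ((n : ℝ) + 1) := by positivity
  have hbd1 : (0 : ℝ) ≤ CB b j * (2 ^ j * ((n : ℝ) + 1) ^ j) :=
    mul_nonneg (CB_nonneg b j) (by positivity)
  have hbd2 : (0 : ℝ) ≤ CB b k * (2 ^ k * ((n : ℝ) + 1) ^ k) :=
    mul_nonneg (CB_nonneg b k) (by positivity)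
  calc |P n * (b ^ 2) ^ n * meixner b j (σ n) * meixner b k (τ n)|
      = |P n| * (b ^ 2) ^ n * |meixner b j (σ n)| * |meixner b k (τ n)| := by
        rw [abs_mul, abs_mul, abs_mul, abs_of_nonneg hqn]
    _ ≤ ((n : ℝ) + 1) ^ 2 * (b ^ 2) ^ n * (CB b j * (2 ^ j * ((n : ℝ) + 1) ^ j))
          * (CB b k * (2 ^ k * ((n : ℝ) + 1) ^ k)) := by
        apply mul_le_mul ?_ hM2 (abs_nonneg _) ?_
        · apply mul_le_mul ?_ hM1 (abs_nonneg _) ?_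
          · exact mul_le_mul_of_nonneg_right (hP n) hqn
          · positivity
        · exact mul_nonneg (by positivity) hbd1
    _ = CB b j * 2 ^ j * (CB b k * 2 ^ k) * ((n : ℝ) + 1) ^ (2 + j + k) * (b ^ 2) ^ n := by
        rw [pow_add, pow_add]; ring

/-! ### The weighted inner products -/

lemma summable_F1 {b : ℝ} (hb0 : 0 < b) (hb1 : b < 1) (j k : ℕ) :
    Summable (fun n : ℕ => (n : ℝ) * (b ^ 2) ^ n * meixner b j n * meixner b k n) := by
  apply summable_form hb0 hb1 j k (fun n => n) (fun n => n) (fun n => Nat.le_succ n)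
    (fun n => Nat.le_succ n)
  intro n
  show |(n : ℝ)| ≤ ((n : ℝ) + 1) ^ 2
  rw [abs_of_nonneg (Nat.cast_nonneg n)]
  nlinarith [Nat.cast_nonneg (α := ℝ) n]

lemma summable_F2 {b : ℝ} (hb0 : 0 < b) (hb1 : b < 1) (j k : ℕ) :
    Summable (fun n : ℕ => (n : ℝ) ^ 2 * (b ^ 2) ^ n * meixner b j n * meixner b k n) := by
  apply summable_form hb0 hb1 j k (fun n => n) (fun n => n) (fun n => Nat.le_succ n)
    (fun n => Nat.le_succ n)
  intro n
  show |(n : ℝ) ^ 2| ≤ ((n : ℝ) + 1) ^ 2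
  rw [abs_of_nonneg (by positivity)]
  nlinarith [Nat.cast_nonneg (α := ℝ) n]

lemma summable_F3 {b : ℝ} (hb0 : 0 < b) (hb1 : b < 1) (j k : ℕ) :
    Summable (fun n : ℕ =>
      (n : ℝ) * (b ^ 2) ^ n * (((n : ℝ) - 1) * meixner b j (n - 1)) * meixner b k n) := by
  have h := summable_form hb0 hb1 j k (fun n => n - 1) (fun n => n)
    (fun n => le_trans (Nat.sub_le n 1) (Nat.le_succ n)) (fun n => Nat.le_succ n)
    (fun n => (n : ℝ) * ((n : ℝ) - 1)) (fun n => by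
      show |(n : ℝ) * ((n : ℝ) - 1)| ≤ ((n : ℝ) + 1) ^ 2
      rw [abs_le]
      constructor <;> nlinarith [Nat.cast_nonneg (α := ℝ) n])
  exact h.congr (fun n => by ring)

lemma summable_F4 {b : ℝ} (hb0 : 0 < b) (hb1 : b < 1) (j k : ℕ) :
    Summable (fun n : ℕ =>
      (n : ℝ) * ((n : ℝ) + 1) * (b ^ 2) ^ n * meixner b j (n + 1) * meixner b k n) := by
  have h := summable_form hb0 hb1 j k (fun n => n + 1) (fun n => n)
    (fun n => le_refl (n + 1)) (fun n => Nat.le_succ n)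
    (fun n => (n : ℝ) * ((n : ℝ) + 1)) (fun n => by
      show |(n : ℝ) * ((n : ℝ) + 1)| ≤ ((n : ℝ) + 1) ^ 2
      rw [abs_of_nonneg (by positivity)]
      nlinarith [Nat.cast_nonneg (α := ℝ) n])
  exact h.congr (fun n => by ring)

lemma summable_F5 {b : ℝ} (hb0 : 0 < b) (hb1 : b < 1) (j k : ℕ) :
    Summable (fun n : ℕ =>
      (n : ℝ) * ((n : ℝ) + 1) * (b ^ 2) ^ n * meixner b j n * meixner b k (n + 1)) := by
  have h := summable_form hb0 hb1 j k (fun n => n) (fun n => n + 1)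
    (fun n => Nat.le_succ n) (fun n => le_refl (n + 1))
    (fun n => (n : ℝ) * ((n : ℝ) + 1)) (fun n => by
      show |(n : ℝ) * ((n : ℝ) + 1)| ≤ ((n : ℝ) + 1) ^ 2
      rw [abs_of_nonneg (by positivity)]
      nlinarith [Nat.cast_nonneg (α := ℝ) n])
  exact h.congr (fun n => by ring)

lemma key_T {b : ℝ} (hb0 : 0 < b) (hb1 : b < 1) (j k : ℕ) :
    (1 - b ^ 2) * ((j : ℝ) + 1)
        * (∑' n : ℕ, (n : ℝ) * (b ^ 2) ^ n * meixner b j n * meixner b k n)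
      = (1 + b ^ 2) * (∑' n : ℕ, (n : ℝ) ^ 2 * (b ^ 2) ^ n * meixner b j n * meixner b k n)
        - b ^ 2 * (∑' n : ℕ,
            (n : ℝ) * ((n : ℝ) + 1) * (b ^ 2) ^ n * meixner b j n * meixner b k (n + 1))
        - b ^ 2 * (∑' n : ℕ,
            (n : ℝ) * ((n : ℝ) + 1) * (b ^ 2) ^ n * meixner b j (n + 1) * meixner b k n) := by
  have hF2 := summable_F2 hb0 hb1 j k
  have hF3 := summable_F3 hb0 hb1 j k
  have hF4 := summable_F4 hb0 hb1 j k
  have step1 : ∀ n : ℕ,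
      (1 - b ^ 2) * ((j : ℝ) + 1) * ((n : ℝ) * (b ^ 2) ^ n * meixner b j n * meixner b k n)
        = (1 + b ^ 2) * ((n : ℝ) ^ 2 * (b ^ 2) ^ n * meixner b j n * meixner b k n)
          - ((n : ℝ) * (b ^ 2) ^ n * (((n : ℝ) - 1) * meixner b j (n - 1)) * meixner b k n)
          - b ^ 2 * ((n : ℝ) * ((n : ℝ) + 1) * (b ^ 2) ^ n * meixner b j (n + 1)
              * meixner b k n) := by
    intro n
    cases n with
    | zero => norm_num
    | succ m =>
        have h := meixner_rec_nat b j m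
        simp only [Nat.add_sub_cancel]
        push_cast
        linear_combination (-(((m : ℝ) + 1) * (b ^ 2) ^ (m + 1) * meixner b k (m + 1))) * h
  have hmid : (∑' n : ℕ,
        (n : ℝ) * (b ^ 2) ^ n * (((n : ℝ) - 1) * meixner b j (n - 1)) * meixner b k n)
      = b ^ 2 * (∑' n : ℕ,
        (n : ℝ) * ((n : ℝ) + 1) * (b ^ 2) ^ n * meixner b j n * meixner b k (n + 1)) := by
    rw [hF3.tsum_eq_zero_add]
    have h0 : ((0 : ℕ) : ℝ) * (b ^ 2) ^ (0 : ℕ) * ((((0 : ℕ) : ℝ) - 1) * meixner b j (0 - 1))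
        * meixner b k 0 = 0 := by norm_num
    rw [h0, zero_add, ← tsum_mul_left]
    apply tsum_congr
    intro n
    simp only [Nat.add_sub_cancel]
    push_cast
    ring
  calc (1 - b ^ 2) * ((j : ℝ) + 1)
        * (∑' n : ℕ, (n : ℝ) * (b ^ 2) ^ n * meixner b j n * meixner b k n)
      = ∑' n : ℕ, (1 - b ^ 2) * ((j : ℝ) + 1)
          * ((n : ℝ) * (b ^ 2) ^ n * meixner b j n * meixner b k n) := tsum_mul_left.symm
    _ = ∑' n : ℕ,
          ((1 + b ^ 2) * ((n : ℝ) ^ 2 * (b ^ 2) ^ n * meixner b j n * meixner b k n)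
          - ((n : ℝ) * (b ^ 2) ^ n * (((n : ℝ) - 1) * meixner b j (n - 1)) * meixner b k n)
          - b ^ 2 * ((n : ℝ) * ((n : ℝ) + 1) * (b ^ 2) ^ n * meixner b j (n + 1)
              * meixner b k n)) := tsum_congr step1
    _ = (∑' n : ℕ,
          ((1 + b ^ 2) * ((n : ℝ) ^ 2 * (b ^ 2) ^ n * meixner b j n * meixner b k n)
          - ((n : ℝ) * (b ^ 2) ^ n * (((n : ℝ) - 1) * meixner b j (n - 1)) * meixner b k n)))
          - ∑' n : ℕ, b ^ 2 * ((n : ℝ) * ((n : ℝ) + 1) * (b ^ 2) ^ n * meixner b j (n + 1)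
              * meixner b k n) := by
        exact Summable.tsum_sub ((hF2.mul_left (1 + b ^ 2)).sub hF3) (hF4.mul_left (b ^ 2))
    _ = (1 + b ^ 2) * (∑' n : ℕ, (n : ℝ) ^ 2 * (b ^ 2) ^ n * meixner b j n * meixner b k n)
        - b ^ 2 * (∑' n : ℕ,
            (n : ℝ) * ((n : ℝ) + 1) * (b ^ 2) ^ n * meixner b j n * meixner b k (n + 1))
        - b ^ 2 * (∑' n : ℕ,
            (n : ℝ) * ((n : ℝ) + 1) * (b ^ 2) ^ n * meixner b j (n + 1) * meixner b k n) := by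
        rw [Summable.tsum_sub (hF2.mul_left (1 + b ^ 2)) hF3, tsum_mul_left, tsum_mul_left,
          hmid]

lemma Sjk_zero {b : ℝ} (hb0 : 0 < b) (hb1 : b < 1) {j k : ℕ} (hjk : j ≠ k) :
    (∑' n : ℕ, (n : ℝ) * (b ^ 2) ^ n * meixner b j n * meixner b k n) = 0 := by
  have h1 := key_T hb0 hb1 j k
  have h2 := key_T hb0 hb1 k j
  have c1 : (∑' n : ℕ, (n : ℝ) * (b ^ 2) ^ n * meixner b k n * meixner b j n)
      = ∑' n : ℕ, (n : ℝ) * (b ^ 2) ^ n * meixner b j n * meixner b k n :=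
    tsum_congr (fun n => by ring)
  have c2 : (∑' n : ℕ, (n : ℝ) ^ 2 * (b ^ 2) ^ n * meixner b k n * meixner b j n)
      = ∑' n : ℕ, (n : ℝ) ^ 2 * (b ^ 2) ^ n * meixner b j n * meixner b k n :=
    tsum_congr (fun n => by ring)
  have c3 : (∑' n : ℕ, (n : ℝ) * ((n : ℝ) + 1) * (b ^ 2) ^ n * meixner b k n * meixner b j (n + 1))
      = ∑' n : ℕ, (n : ℝ) * ((n : ℝ) + 1) * (b ^ 2) ^ n * meixner b j (n + 1) * meixner b k n :=
    tsum_congr (fun n => by ring)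
  have c4 : (∑' n : ℕ, (n : ℝ) * ((n : ℝ) + 1) * (b ^ 2) ^ n * meixner b k (n + 1) * meixner b j n)
      = ∑' n : ℕ, (n : ℝ) * ((n : ℝ) + 1) * (b ^ 2) ^ n * meixner b j n * meixner b k (n + 1) :=
    tsum_congr (fun n => by ring)
  rw [c1, c2, c3, c4] at h2
  have key : (1 - b ^ 2) * ((j : ℝ) + 1)
        * (∑' n : ℕ, (n : ℝ) * (b ^ 2) ^ n * meixner b j n * meixner b k n)
      = (1 - b ^ 2) * ((k : ℝ) + 1)
        * (∑' n : ℕ, (n : ℝ) * (b ^ 2) ^ n * meixner b j n * meixner b k n) := by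
    linarith
  by_contra hS
  have hfac := mul_right_cancel₀ hS key
  have hc : (1 - b ^ 2) ≠ 0 := by nlinarith
  have hjj := mul_left_cancel₀ hc hfac
  have : (j : ℝ) = (k : ℝ) := by linarith
  exact hjk (by exact_mod_cast this)

lemma N_step {b : ℝ} (hb0 : 0 < b) (hb1 : b < 1) (k : ℕ) :
    ((k : ℝ) + 2) * (∑' n : ℕ, (n : ℝ) * (b ^ 2) ^ n * meixner b (k + 1) n * meixner b (k + 1) n)
      = ((k : ℝ) + 1) * b ^ 2
        * (∑' n : ℕ, (n : ℝ) * (b ^ 2) ^ n * meixner b k n * meixner b k n) := by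
  have hA := summable_F1 hb0 hb1 (k + 1) (k + 1)
  have hB := summable_F1 hb0 hb1 (k + 1) k
  have hC := summable_F1 hb0 hb1 (k + 1) (k - 1)
  have hD := summable_F1 hb0 hb1 k (k + 2)
  have hE := summable_F1 hb0 hb1 k (k + 1)
  have hF := summable_F1 hb0 hb1 k k
  -- E1 : from the degree recurrence at level k, paired with M_{k+1}
  have e1 : ∀ n : ℕ, (-(1 - b ^ 2))
        * ((n : ℝ) ^ 2 * (b ^ 2) ^ n * meixner b (k + 1) n * meixner b k n)
      = ((k : ℝ) + 2) * ((n : ℝ) * (b ^ 2) ^ n * meixner b (k + 1) n * meixner b (k + 1) n)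
        - ((k : ℝ) + 1) * (1 + b ^ 2)
            * ((n : ℝ) * (b ^ 2) ^ n * meixner b (k + 1) n * meixner b k n)
        + (k : ℝ) * b ^ 2
            * ((n : ℝ) * (b ^ 2) ^ n * meixner b (k + 1) n * meixner b (k - 1) n) := by
    intro n
    have h := meixner_krec b k n
    linear_combination ((n : ℝ) * (b ^ 2) ^ n * meixner b (k + 1) n) * h
  have E1 : (-(1 - b ^ 2))
        * (∑' n : ℕ, (n : ℝ) ^ 2 * (b ^ 2) ^ n * meixner b (k + 1) n * meixner b k n)
      = ((k : ℝ) + 2)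
          * (∑' n : ℕ, (n : ℝ) * (b ^ 2) ^ n * meixner b (k + 1) n * meixner b (k + 1) n)
        - ((k : ℝ) + 1) * (1 + b ^ 2)
            * (∑' n : ℕ, (n : ℝ) * (b ^ 2) ^ n * meixner b (k + 1) n * meixner b k n)
        + (k : ℝ) * b ^ 2
            * (∑' n : ℕ, (n : ℝ) * (b ^ 2) ^ n * meixner b (k + 1) n * meixner b (k - 1) n) := by
    rw [← tsum_mul_left]
    rw [show (fun n : ℕ => (-(1 - b ^ 2))
        * ((n : ℝ) ^ 2 * (b ^ 2) ^ n * meixner b (k + 1) n * meixner b k n)) = fun n : ℕ =>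
        (((k : ℝ) + 2) * ((n : ℝ) * (b ^ 2) ^ n * meixner b (k + 1) n * meixner b (k + 1) n)
        - ((k : ℝ) + 1) * (1 + b ^ 2)
            * ((n : ℝ) * (b ^ 2) ^ n * meixner b (k + 1) n * meixner b k n))
        + (k : ℝ) * b ^ 2
            * ((n : ℝ) * (b ^ 2) ^ n * meixner b (k + 1) n * meixner b (k - 1) n)
      from funext e1]
    rw [Summable.tsum_add ((hA.mul_left _).sub (hB.mul_left _)) (hC.mul_left _),
      Summable.tsum_sub (hA.mul_left _) (hB.mul_left _), tsum_mul_left, tsum_mul_left,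
      tsum_mul_left]
  -- E2 : from the degree recurrence at level k+1, paired with M_k
  have e2 : ∀ n : ℕ, (-(1 - b ^ 2))
        * ((n : ℝ) ^ 2 * (b ^ 2) ^ n * meixner b (k + 1) n * meixner b k n)
      = ((k : ℝ) + 3) * ((n : ℝ) * (b ^ 2) ^ n * meixner b k n * meixner b (k + 2) n)
        - ((k : ℝ) + 2) * (1 + b ^ 2)
            * ((n : ℝ) * (b ^ 2) ^ n * meixner b k n * meixner b (k + 1) n)
        + ((k : ℝ) + 1) * b ^ 2
            * ((n : ℝ) * (b ^ 2) ^ n * meixner b k n * meixner b k n) := by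
    intro n
    have h := meixner_krec b (k + 1) n
    simp only [Nat.add_sub_cancel] at h
    push_cast at h
    linear_combination ((n : ℝ) * (b ^ 2) ^ n * meixner b k n) * h
  have E2 : (-(1 - b ^ 2))
        * (∑' n : ℕ, (n : ℝ) ^ 2 * (b ^ 2) ^ n * meixner b (k + 1) n * meixner b k n)
      = ((k : ℝ) + 3)
          * (∑' n : ℕ, (n : ℝ) * (b ^ 2) ^ n * meixner b k n * meixner b (k + 2) n)
        - ((k : ℝ) + 2) * (1 + b ^ 2)
            * (∑' n : ℕ, (n : ℝ) * (b ^ 2) ^ n * meixner b k n * meixner b (k + 1) n)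
        + ((k : ℝ) + 1) * b ^ 2
            * (∑' n : ℕ, (n : ℝ) * (b ^ 2) ^ n * meixner b k n * meixner b k n) := by
    rw [← tsum_mul_left]
    rw [show (fun n : ℕ => (-(1 - b ^ 2))
        * ((n : ℝ) ^ 2 * (b ^ 2) ^ n * meixner b (k + 1) n * meixner b k n)) = fun n : ℕ =>
        (((k : ℝ) + 3) * ((n : ℝ) * (b ^ 2) ^ n * meixner b k n * meixner b (k + 2) n)
        - ((k : ℝ) + 2) * (1 + b ^ 2)
            * ((n : ℝ) * (b ^ 2) ^ n * meixner b k n * meixner b (k + 1) n))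
        + ((k : ℝ) + 1) * b ^ 2
            * ((n : ℝ) * (b ^ 2) ^ n * meixner b k n * meixner b k n)
      from funext e2]
    rw [Summable.tsum_add ((hD.mul_left _).sub (hE.mul_left _)) (hF.mul_left _),
      Summable.tsum_sub (hD.mul_left _) (hE.mul_left _), tsum_mul_left, tsum_mul_left,
      tsum_mul_left]
  have z1 : (∑' n : ℕ, (n : ℝ) * (b ^ 2) ^ n * meixner b (k + 1) n * meixner b k n) = 0 :=
    Sjk_zero hb0 hb1 (by omega)
  have z2 : (∑' n : ℕ, (n : ℝ) * (b ^ 2) ^ n * meixner b (k + 1) n * meixner b (k - 1) n) = 0 :=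
    Sjk_zero hb0 hb1 (by omega)
  have z3 : (∑' n : ℕ, (n : ℝ) * (b ^ 2) ^ n * meixner b k n * meixner b (k + 2) n) = 0 :=
    Sjk_zero hb0 hb1 (by omega)
  have z4 : (∑' n : ℕ, (n : ℝ) * (b ^ 2) ^ n * meixner b k n * meixner b (k + 1) n) = 0 :=
    Sjk_zero hb0 hb1 (by omega)
  simp only [z1, z2, z3, z4] at E1 E2
  linarith

lemma meixner_deg_zero (b : ℝ) (n : ℕ) : meixner b 0 n = 1 := by simp [meixner]

lemma N_val {b : ℝ} (hb0 : 0 < b) (hb1 : b < 1) (k : ℕ) :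
    (∑' n : ℕ, (n : ℝ) * (b ^ 2) ^ n * meixner b k n * meixner b k n)
      = (b ^ 2) ^ (k + 1) / (((k : ℝ) + 1) * (1 - b ^ 2) ^ 2) := by
  have hq1 : b ^ 2 < 1 := by nlinarith
  have hc : (1 - b ^ 2) ≠ 0 := by nlinarith
  induction k with
  | zero =>
      have hfun : (fun n : ℕ => (n : ℝ) * (b ^ 2) ^ n * meixner b 0 n * meixner b 0 n)
          = fun n : ℕ => (n : ℝ) * (b ^ 2) ^ n := by
        funext n; rw [meixner_deg_zero]; ring
      rw [hfun, tsum_coe_mul_geometric_of_norm_lt_one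
        (by rw [Real.norm_eq_abs, abs_of_pos (by positivity)]; exact hq1)]
      norm_num
  | succ k ih =>
      have h := N_step hb0 hb1 k
      rw [ih] at h
      have hk2 : ((k : ℝ) + 2) ≠ 0 := by positivity
      have hk1 : ((k : ℝ) + 1) ≠ 0 := by positivity
      push_cast
      rw [show ((k : ℝ) + 1 + 1) = ((k : ℝ) + 2) by ring]
      field_simp at h
      rw [eq_div_iff (by exact mul_ne_zero hk2 (pow_ne_zero 2 hc))]
      apply mul_left_cancel₀ hk1
      have hXY : (∑' n : ℕ, (n : ℝ) * (b ^ 2) ^ n * meixner b (k + 1) n * meixner b (k + 1) n)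
          = ∑' n : ℕ, (n : ℝ) * (b ^ 2) ^ n * meixner b (k + 1) n ^ 2 :=
        tsum_congr (fun n => by ring)
      linear_combination ((k : ℝ) + 1) * h
        + ((k : ℝ) + 1) * ((k : ℝ) + 2) * (1 - b ^ 2) ^ 2 * hXY

/-! ### The main theorem -/

theorem meixner_psi_normalized_eigenvector (b : ℝ) (hb0 : 0 < b) (hb1 : b < 1) (k : ℕ) :
    Summable (fun n : ℕ => if 1 ≤ n then (meixnerPsi b k n) ^ 2 else 0) ∧
    (∑' n : ℕ, if 1 ≤ n then (meixnerPsi b k n) ^ 2 else 0) = 1 ∧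
    (∀ n : ℕ, 1 ≤ n →
      (1 + b ^ 2) * n * meixnerPsi b k n
          + b * Real.sqrt (((n : ℝ) - 1) * n) * meixnerPsi b k (n - 1)
          + b * Real.sqrt (n * (n + 1)) * meixnerPsi b k (n + 1)
        = (1 - b ^ 2) * (k + 1) * meixnerPsi b k n) := by
  have hq1 : b ^ 2 < 1 := by nlinarith
  have hc : (0 : ℝ) < 1 - b ^ 2 := by nlinarith
  have hpsi : ∀ n : ℕ, meixnerPsi b k n ^ 2
      = ((1 - b ^ 2) ^ 2 * (((k : ℝ) + 1) / b ^ (2 * (k + 1))))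
        * ((n : ℝ) * (b ^ 2) ^ n * meixner b k n * meixner b k n) := by
    intro n
    have h1 : Real.sqrt (n : ℝ) ^ 2 = (n : ℝ) := Real.sq_sqrt (Nat.cast_nonneg n)
    have h2 : Real.sqrt (((k : ℝ) + 1) / b ^ (2 * (k + 1))) ^ 2
        = ((k : ℝ) + 1) / b ^ (2 * (k + 1)) := Real.sq_sqrt (by positivity)
    have h3 : ((-1 : ℝ) ^ n) ^ 2 = 1 := by
      rw [← pow_mul, mul_comm, pow_mul]; norm_num
    have h4 : (b ^ n) ^ 2 = (b ^ 2) ^ n := by rw [← pow_mul, mul_comm, pow_mul]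
    calc meixnerPsi b k n ^ 2
        = ((-1 : ℝ) ^ n) ^ 2 * (b ^ n) ^ 2 * Real.sqrt (n : ℝ) ^ 2
            * ((1 - b ^ 2) ^ 2 * Real.sqrt (((k : ℝ) + 1) / b ^ (2 * (k + 1))) ^ 2
              * (meixner b k n) ^ 2) := by
          rw [meixnerPsi]; ring
      _ = _ := by rw [h1, h2, h3, h4]; ring
  have hfun : (fun n : ℕ => if 1 ≤ n then meixnerPsi b k n ^ 2 else 0)
      = fun n : ℕ => ((1 - b ^ 2) ^ 2 * (((k : ℝ) + 1) / b ^ (2 * (k + 1))))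
          * ((n : ℝ) * (b ^ 2) ^ n * meixner b k n * meixner b k n) := by
    funext n
    cases n with
    | zero => simp
    | succ m => rw [if_pos (by omega)]; exact hpsi (m + 1)
  refine ⟨?_, ?_, ?_⟩
  · rw [hfun]
    exact (summable_F1 hb0 hb1 k k).mul_left _
  · rw [hfun, tsum_mul_left, N_val hb0 hb1 k]
    have hpow : b ^ (2 * (k + 1)) = (b ^ 2) ^ (k + 1) := by rw [pow_mul]
    rw [hpow]
    have h1 : ((k : ℝ) + 1) ≠ 0 := by positivity
    have h2 : (b ^ 2) ^ (k + 1) ≠ 0 := by positivity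
    field_simp
  · intro n hn
    obtain ⟨m, rfl⟩ : ∃ m, n = m + 1 := ⟨n - 1, by omega⟩
    simp only [Nat.add_sub_cancel]
    have h := meixner_rec_nat b k m
    have hr1 : Real.sqrt (m : ℝ) * Real.sqrt (m : ℝ) = (m : ℝ) :=
      Real.mul_self_sqrt (Nat.cast_nonneg m)
    have hr3 : Real.sqrt ((m : ℝ) + 2) * Real.sqrt ((m : ℝ) + 2) = (m : ℝ) + 2 :=
      Real.mul_self_sqrt (by positivity)
    simp only [meixnerPsi]
    push_cast
    rw [show ((m : ℝ) + 1 - 1) = (m : ℝ) by ring]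
    rw [show ((m : ℝ) + 1 + 1) = (m : ℝ) + 2 by ring]
    rw [Real.sqrt_mul (Nat.cast_nonneg m) ((m : ℝ) + 1)]
    rw [Real.sqrt_mul (by positivity : (0:ℝ) ≤ (m : ℝ) + 1) ((m : ℝ) + 2)]
    linear_combination
      ((-1 : ℝ) ^ (m + 1) * b ^ (m + 1) * Real.sqrt ((m : ℝ) + 1)
        * ((1 - b ^ 2) * Real.sqrt (((k : ℝ) + 1) / b ^ (2 * (k + 1))))) * h
      + ((-1 : ℝ) ^ m * b ^ (m + 1) * Real.sqrt ((m : ℝ) + 1)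
        * ((1 - b ^ 2) * Real.sqrt (((k : ℝ) + 1) / b ^ (2 * (k + 1))))
        * meixner b k m) * hr1
      + ((-1 : ℝ) ^ m * b ^ (m + 3) * Real.sqrt ((m : ℝ) + 1)
        * ((1 - b ^ 2) * Real.sqrt (((k : ℝ) + 1) / b ^ (2 * (k + 1))))
        * meixner b k (m + 2)) * hr3
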